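/- arXiv:2508.06774 — 3 statements merged into one kernel-verified Lean document; each statement's English description precedes it below -/
import Mathlib

section
/- There is an absolute constant C₀ such that the following holds for every integer n ≥ 2, every real ε > 0, and every integer d' ≥ C₀·log n. (a) If z₁,…,zₙ are i.i.d. random vectors uniform on [0,ε]^{d'}, then with probability at least 1 − 1/n, every pair i ≠ j satisfies ‖zᵢ − zⱼ‖₁ ≥ ε·d'/6. (b) Deterministically: for any x₁,…,xₙ ∈ ℝ^d, any ζ₁,…,ζₙ ∈ [0,ε]^{d'}, and yᵢ := (xᵢ, ζᵢ) ∈ ℝ^{d+d'}, every b ∈ ℝⁿ with Σᵢ bᵢ = 0 and Σᵢ max(bᵢ, 0) ≤ n satisfies EMD_X(b) ≤ EMD_Y(b) ≤ EMD_X(b) + ε·d'·n, where EMD_X and EMD_Y are the min-cost-flow values with edge costs ‖xᵢ − xⱼ‖₁ and ‖yᵢ − yⱼ‖₁ respectively. -/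
open Finset MeasureTheory intervalIntegral
open scoped ENNReal

/-- ℓ₁ distance on functions `ι → ℝ`. -/
noncomputable def l1dist {ι : Type} [Fintype ι] (u v : ι → ℝ) : ℝ := ∑ k, |u k - v k|

/-- Min-cost-flow Earth Mover's Distance of a vector `b` (with `∑ b = 0`) with respect to
the cost matrix `cost`. -/
noncomputable def EMDgen {ι : Type} [Fintype ι] (cost : ι → ι → ℝ) (b : ι → ℝ) : ℝ :=
  sInf { c : ℝ | ∃ γ : ι → ι → ℝ, (∀ i j, 0 ≤ γ i j) ∧
    (∀ i, ∑ j, γ i j = max (b i) 0) ∧ (∀ j, ∑ i, γ i j = max (-(b j)) 0) ∧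
    c = ∑ i, ∑ j, γ i j * cost i j }

/-- The uniform probability measure on the cube `[0, r]^d ⊆ ℝ^d`. -/
noncomputable def uniformCube (d : ℕ) (r : ℝ) : Measure (Fin d → ℝ) :=
  (volume (Set.univ.pi fun _ : Fin d => Set.Icc (0 : ℝ) r))⁻¹ •
    volume.restrict (Set.univ.pi fun _ : Fin d => Set.Icc (0 : ℝ) r)

noncomputable def unif1 (r : ℝ) : Measure ℝ :=
  (ENNReal.ofReal r)⁻¹ • volume.restrict (Set.Icc (0 : ℝ) r)

lemma unif1_isProb {r : ℝ} (hr : 0 < r) : IsProbabilityMeasure (unif1 r) := by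
  constructor
  rw [unif1, Measure.smul_apply, Measure.restrict_apply MeasurableSet.univ,
    Set.univ_inter, Real.volume_Icc, smul_eq_mul, sub_zero]
  rw [ENNReal.inv_mul_cancel (by simpa using hr) ENNReal.ofReal_ne_top]

lemma uniformCube_eq_pi {d : ℕ} {r : ℝ} (hr : 0 < r) :
    uniformCube d r = Measure.pi fun _ : Fin d => unif1 r := by
  haveI : IsProbabilityMeasure (unif1 r) := unif1_isProb hr
  refine (Measure.pi_eq fun s hs => ?_).symm
  simp only [uniformCube, unif1, Measure.smul_apply, smul_eq_mul]
  rw [Measure.restrict_apply (MeasurableSet.univ_pi hs)]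
  have hinter : (Set.univ.pi s) ∩ (Set.univ.pi fun _ : Fin d => Set.Icc (0:ℝ) r)
      = Set.univ.pi fun i => s i ∩ Set.Icc (0:ℝ) r := by
    rw [← Set.pi_inter_distrib]
  rw [hinter, volume_pi, Measure.pi_pi, Measure.pi_pi]
  have hcube : (∏ _i : Fin d, volume (Set.Icc (0:ℝ) r)) = ENNReal.ofReal r ^ d := by
    simp [Real.volume_Icc]
  rw [hcube, Finset.prod_mul_distrib, Finset.prod_const, Finset.card_univ, Fintype.card_fin,
    ← ENNReal.inv_pow]
  congr 1
  refine Finset.prod_congr rfl fun i _ => ?_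
  rw [Measure.restrict_apply (hs i)]

lemma uniformCube_isProb {d : ℕ} {r : ℝ} (hr : 0 < r) :
    IsProbabilityMeasure (uniformCube d r) := by
  haveI : IsProbabilityMeasure (unif1 r) := unif1_isProb hr
  rw [uniformCube_eq_pi hr]
  infer_instance

lemma lintegral_unif1 {ε : ℝ} (f : ℝ → ℝ≥0∞) :
    ∫⁻ x, f x ∂(unif1 ε) = (ENNReal.ofReal ε)⁻¹ * ∫⁻ x in Set.Icc (0:ℝ) ε, f x := by
  rw [unif1, lintegral_smul_measure, smul_eq_mul]

lemma lintegral_pi_pow {E : Type*} [MeasurableSpace E] (μ : Measure E) [SigmaFinite μ]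
    (f : E → ℝ≥0∞) (hf : Measurable f) :
    ∀ n : ℕ, ∫⁻ w, ∏ k, f (w k) ∂(Measure.pi fun _ : Fin n => μ) = (∫⁻ x, f x ∂μ) ^ n := by
  intro n
  induction n with
  | zero =>
    simp only [Finset.univ_eq_empty, Finset.prod_empty, pow_zero, lintegral_one]
    rw [Measure.pi_univ]; simp
  | succ n ih =>
    have hmp := measurePreserving_piFinSuccAbove (fun _ : Fin (n+1) => μ) 0
    have hgm : Measurable (fun p : E × (Fin n → E) => f p.1 * ∏ k, f (p.2 k)) := by
      refine (hf.comp measurable_fst).mul ?_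
      exact Finset.measurable_prod _ fun k _ => hf.comp ((measurable_pi_apply k).comp measurable_snd)
    have hcomp : ∀ w : Fin (n+1) → E,
        (fun p : E × (Fin n → E) => f p.1 * ∏ k, f (p.2 k)) (MeasurableEquiv.piFinSuccAbove (fun _ => E) 0 w)
          = ∏ k, f (w k) := by
      intro w
      rw [Fin.prod_univ_succAbove (fun k => f (w k)) 0]
      rfl
    calc ∫⁻ w, ∏ k, f (w k) ∂(Measure.pi fun _ : Fin (n+1) => μ)
        = ∫⁻ w, (fun p : E × (Fin n → E) => f p.1 * ∏ k, f (p.2 k))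
            (MeasurableEquiv.piFinSuccAbove (fun _ => E) 0 w) ∂(Measure.pi fun _ => μ) := by
          simp_rw [hcomp]
      _ = ∫⁻ p, f p.1 * ∏ k, f (p.2 k) ∂(μ.prod (Measure.pi fun _ : Fin n => μ)) :=
          hmp.lintegral_comp hgm
      _ = (∫⁻ x, f x ∂μ) * (∫⁻ x, f x ∂μ) ^ n := by
          rw [lintegral_prod_mul (f := f) (g := fun v : Fin n → E => ∏ k, f (v k)) hf.aemeasurable
            (Finset.measurable_prod _ fun k _ => hf.comp (measurable_pi_apply k)).aemeasurable, ih]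
      _ = (∫⁻ x, f x ∂μ) ^ (n+1) := by ring

lemma map_pair_pi {n : ℕ} {E : Type*} [MeasurableSpace E] (ν : Measure E)
    [IsProbabilityMeasure ν] {i j : Fin n} (hij : i ≠ j) :
    Measure.map (fun z : Fin n → E => (z i, z j)) (Measure.pi fun _ => ν) = ν.prod ν := by
  classical
  refine (Measure.prod_eq fun s t hs ht => ?_).symm
  rw [Measure.map_apply (by exact (measurable_pi_apply i).prodMk (measurable_pi_apply j))
    (hs.prod ht)]
  have hpre : (fun z : Fin n → E => (z i, z j)) ⁻¹' (s ×ˢ t)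
      = Set.univ.pi fun k => if k = i then s else if k = j then t else Set.univ := by
    ext z
    simp only [Set.mem_preimage, Set.mem_prod, Set.mem_pi, Set.mem_univ, true_implies]
    constructor
    · rintro ⟨h1, h2⟩ k
      by_cases hki : k = i
      · subst hki; simp [if_pos rfl, h1]
      · by_cases hkj : k = j
        · subst hkj; simp [if_neg hki, h2]
        · simp [if_neg hki, if_neg hkj]
    · intro h
      constructor
      · have := h i; simpa using this
      · have := h j; simpa [if_neg (Ne.symm hij)] using this
  rw [hpre, Measure.pi_pi]
  have : ∀ k : Fin n, ν (if k = i then s else if k = j then t else Set.univ)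
      = if k = i then ν s else if k = j then ν t else 1 := by
    intro k
    split_ifs <;> simp
  simp_rw [this]
  rw [← Finset.prod_subset (Finset.subset_univ ({i, j} : Finset (Fin n)))
    (fun k _ hk => ?_), Finset.prod_pair hij]
  · simp [if_neg (Ne.symm hij)]
  · simp only [Finset.mem_insert, Finset.mem_singleton, not_or] at hk
    simp [if_neg hk.1, if_neg hk.2]

lemma abs_integral {ε x : ℝ} (h0 : 0 ≤ x) (h1 : x ≤ ε) :
    ∫ y in (0:ℝ)..ε, |x - y| = (x^2 + (ε-x)^2)/2 := by
  have hi : ∀ a b : ℝ, IntervalIntegrable (fun y => |x - y|) volume a b :=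
    fun a b => ((continuous_const.sub continuous_id).abs).intervalIntegrable a b
  rw [← integral_add_adjacent_intervals (b := x) (hi 0 x) (hi x ε)]
  have e1 : ∫ y in (0:ℝ)..x, |x - y| = ∫ y in (0:ℝ)..x, (x - y) := by
    refine integral_congr fun y hy => ?_
    rw [Set.uIcc_of_le h0] at hy
    exact abs_of_nonneg (by linarith [hy.2])
  have e2 : ∫ y in x..ε, |x - y| = ∫ y in x..ε, (y - x) := by
    refine integral_congr fun y hy => ?_
    rw [Set.uIcc_of_le h1] at hy
    rw [abs_sub_comm]
    exact abs_of_nonneg (by linarith [hy.1])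
  have hid : ∀ a b : ℝ, IntervalIntegrable (fun y : ℝ => y) volume a b :=
    fun a b => continuous_id.intervalIntegrable a b
  have hc : ∀ a b c : ℝ, IntervalIntegrable (fun _ : ℝ => c) volume a b :=
    fun a b c => continuous_const.intervalIntegrable a b
  rw [e1, e2]
  rw [integral_sub (hc 0 x x) (hid 0 x), integral_sub (hid x ε) (hc x ε x)]
  rw [intervalIntegral.integral_const, intervalIntegral.integral_const, integral_id, integral_id]
  simp only [smul_eq_mul]
  ring

lemma sq_integral (ε x : ℝ) :
    ∫ y in (0:ℝ)..ε, (x - y)^2 = x^2*ε - x*ε^2 + ε^3/3 := by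
  have : ∀ y : ℝ, (x - y)^2 = x^2 - (2*x)*y + y^2 := fun y => by ring
  simp_rw [this]
  have hid : IntervalIntegrable (fun y : ℝ => (2*x)*y) volume 0 ε :=
    (continuous_const.mul continuous_id).intervalIntegrable 0 ε
  have hc : IntervalIntegrable (fun _ : ℝ => x^2) volume 0 ε :=
    continuous_const.intervalIntegrable 0 ε
  have hsq : IntervalIntegrable (fun y : ℝ => y^2) volume 0 ε :=
    (continuous_id.pow 2).intervalIntegrable 0 ε
  rw [integral_add (hc.sub hid) hsq, integral_sub hc hid, intervalIntegral.integral_const,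
    intervalIntegral.integral_const_mul, integral_id, integral_pow]
  simp only [smul_eq_mul]
  ring

lemma Q_integral {ε x : ℝ} (hε : 0 < ε) (h0 : 0 ≤ x) (h1 : x ≤ ε) :
    ∫ y in Set.Icc (0:ℝ) ε, (1 - |x - y|/ε + (x - y)^2/(2*ε^2))
      = 2*ε/3 + x/2 - x^2/(2*ε) := by
  rw [MeasureTheory.integral_Icc_eq_integral_Ioc, ← intervalIntegral.integral_of_le hε.le]
  have habs : IntervalIntegrable (fun y => |x - y|/ε) volume 0 ε :=
    (((continuous_const.sub continuous_id).abs).div_const ε).intervalIntegrable 0 ε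
  have hsq : IntervalIntegrable (fun y => (x - y)^2/(2*ε^2)) volume 0 ε :=
    ((((continuous_const.sub continuous_id).pow 2)).div_const _).intervalIntegrable 0 ε
  have hone : IntervalIntegrable (fun _ : ℝ => (1:ℝ)) volume 0 ε :=
    continuous_const.intervalIntegrable 0 ε
  rw [integral_add (hone.sub habs) hsq, integral_sub hone habs]
  have d1 : ∫ y in (0:ℝ)..ε, |x - y|/ε = (∫ y in (0:ℝ)..ε, |x - y|)/ε :=
    integral_div ε _
  have d2 : ∫ y in (0:ℝ)..ε, (x - y)^2/(2*ε^2) = (∫ y in (0:ℝ)..ε, (x - y)^2)/(2*ε^2) :=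
    integral_div _ _
  rw [d1, d2, abs_integral h0 h1, sq_integral, intervalIntegral.integral_const]
  simp only [smul_eq_mul]
  field_simp
  ring

lemma P_integral {ε : ℝ} (hε : 0 < ε) :
    ∫ x in Set.Icc (0:ℝ) ε, (2*ε/3 + x/2 - x^2/(2*ε)) = 3/4 * ε^2 := by
  rw [MeasureTheory.integral_Icc_eq_integral_Ioc, ← intervalIntegral.integral_of_le hε.le]
  have hc : IntervalIntegrable (fun _ : ℝ => 2*ε/3) volume 0 ε :=
    continuous_const.intervalIntegrable 0 ε
  have hx : IntervalIntegrable (fun x : ℝ => x/2) volume 0 ε :=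
    (continuous_id.div_const 2).intervalIntegrable 0 ε
  have hx2 : IntervalIntegrable (fun x : ℝ => x^2/(2*ε)) volume 0 ε :=
    ((continuous_id.pow 2).div_const _).intervalIntegrable 0 ε
  rw [integral_sub (hc.add hx) hx2, integral_add hc hx]
  rw [intervalIntegral.integral_const, intervalIntegral.integral_div, intervalIntegral.integral_div, integral_id, integral_pow]
  simp only [smul_eq_mul]
  field_simp
  ring

lemma exp_neg_le_quad {x : ℝ} (hx : 0 ≤ x) : Real.exp (-x) ≤ 1 - x + x^2/2 := by
  have h1 : 1 + x + x^2/2 ≤ Real.exp x := by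
    have := Real.sum_le_exp_of_nonneg hx 3
    simp [Finset.sum_range_succ, Nat.factorial] at this
    linarith
  have hq : 0 ≤ 1 - x + x^2/2 := by nlinarith [sq_nonneg (x-1)]
  rw [Real.exp_neg, inv_le_iff_one_le_mul₀ (Real.exp_pos x)]
  nlinarith [mul_le_mul_of_nonneg_left h1 hq, sq_nonneg (x^2)]

lemma exp_quarter : Real.exp (1/4 : ℝ) ≤ 4/3 := by
  have h := Real.add_one_le_exp (-(1/4) : ℝ)
  have h2 : (3/4 : ℝ) ≤ (Real.exp (1/4))⁻¹ := by
    rw [← Real.exp_neg]; linarith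
  have h3 := Real.exp_pos (1/4 : ℝ)
  rw [le_inv_comm₀ (by norm_num) h3] at h2
  linarith [h2]

lemma I_le {ε : ℝ} (hε : 0 < ε) :
    ∫⁻ q : ℝ × ℝ, ENNReal.ofReal (Real.exp (-(|q.1 - q.2|/ε))) ∂((unif1 ε).prod (unif1 ε))
      ≤ ENNReal.ofReal (3/4) := by
  haveI : IsProbabilityMeasure (unif1 ε) := unif1_isProb hε
  set Q : ℝ × ℝ → ℝ := fun q => 1 - |q.1 - q.2|/ε + (q.1 - q.2)^2/(2*ε^2) with hQ
  have hQcont : Continuous Q := by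
    apply Continuous.add
    · exact continuous_const.sub (((continuous_fst.sub continuous_snd).abs).div_const ε)
    · exact ((continuous_fst.sub continuous_snd).pow 2).div_const _
  have key : ∀ q : ℝ × ℝ, Q q = 1 - (|q.1 - q.2|/ε) + (|q.1 - q.2|/ε)^2/2 := by
    intro q; rw [hQ]; simp only []; rw [div_pow, sq_abs]; ring
  have hQnn : ∀ q : ℝ × ℝ, 0 ≤ Q q := by
    intro q
    rw [key q]
    nlinarith [sq_nonneg (|q.1 - q.2|/ε - 1)]
  have step1 : ∫⁻ q : ℝ × ℝ, ENNReal.ofReal (Real.exp (-(|q.1 - q.2|/ε)))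
      ∂((unif1 ε).prod (unif1 ε)) ≤ ∫⁻ q, ENNReal.ofReal (Q q) ∂((unif1 ε).prod (unif1 ε)) := by
    refine lintegral_mono fun q => ENNReal.ofReal_le_ofReal ?_
    rw [key q]
    exact exp_neg_le_quad (div_nonneg (abs_nonneg _) hε.le)
  refine step1.trans ?_
  have hmeas : Measurable fun q : ℝ × ℝ => ENNReal.ofReal (Q q) :=
    ENNReal.measurable_ofReal.comp hQcont.measurable
  rw [lintegral_prod _ hmeas.aemeasurable]
  set c := (ENNReal.ofReal ε)⁻¹ with hc
  have hcne : c ≠ ⊤ := by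
    rw [hc]
    exact ENNReal.inv_ne_top.mpr (by simpa using hε)
  have inner : ∀ x ∈ Set.Icc (0:ℝ) ε, ∫⁻ y, ENNReal.ofReal (Q (x, y)) ∂(unif1 ε)
      = c * ENNReal.ofReal (2*ε/3 + x/2 - x^2/(2*ε)) := by
    intro x hx
    rw [lintegral_unif1]
    congr 1
    rw [← ofReal_integral_eq_lintegral_ofReal ?_ (Filter.Eventually.of_forall fun y => hQnn _)]
    · rw [show (∫ y in Set.Icc (0:ℝ) ε, Q (x, y)) = ∫ y in Set.Icc (0:ℝ) ε,
        (1 - |x - y|/ε + (x - y)^2/(2*ε^2)) from rfl, Q_integral hε hx.1 hx.2]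
    · exact (hQcont.comp (Continuous.prodMk_right x)).integrableOn_Icc
  rw [lintegral_unif1]
  rw [setLIntegral_congr_fun measurableSet_Icc inner]
  rw [lintegral_const_mul' _ _ hcne]
  have hP : ∫⁻ x in Set.Icc (0:ℝ) ε, ENNReal.ofReal (2*ε/3 + x/2 - x^2/(2*ε))
      = ENNReal.ofReal (3/4 * ε^2) := by
    rw [← ofReal_integral_eq_lintegral_ofReal ?_ ?_]
    · rw [P_integral hε]
    · exact (Continuous.integrableOn_Icc (by continuity))
    · refine (ae_restrict_iff' measurableSet_Icc).mpr (Filter.Eventually.of_forall fun x hx => ?_)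
      have h1 : x^2 ≤ ε * x := by nlinarith [hx.1, hx.2]
      have h2 : x^2/(2*ε) ≤ x/2 := by
        rw [div_le_div_iff₀ (by positivity) (by norm_num)]
        nlinarith
      simp only [Pi.zero_apply]
      nlinarith [hx.1, hε]
  rw [hP, hc, ← ENNReal.ofReal_inv_of_pos hε, ← ENNReal.ofReal_mul (by positivity),
    ← ENNReal.ofReal_mul (by positivity)]
  refine le_of_eq (congrArg _ ?_)
  field_simp

lemma pair_tail {ε : ℝ} (hε : 0 < ε) (d' : ℕ) :
    ((Measure.pi fun _ : Fin d' => unif1 ε).prod (Measure.pi fun _ : Fin d' => unif1 ε))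
      {p : (Fin d' → ℝ) × (Fin d' → ℝ) | ∑ k, |p.1 k - p.2 k| < ε * (d' : ℝ) / 6}
    ≤ ENNReal.ofReal (Real.exp (-(d' : ℝ)/12)) := by
  haveI : IsProbabilityMeasure (unif1 ε) := unif1_isProb hε
  -- transfer to the pi measure over pairs
  have hmp := measurePreserving_arrowProdEquivProdArrow ℝ ℝ (Fin d')
    (fun _ => unif1 ε) (fun _ => unif1 ε)
  have hSmeas : MeasurableSet {p : (Fin d' → ℝ) × (Fin d' → ℝ) |
      ∑ k, |p.1 k - p.2 k| < ε * (d' : ℝ) / 6} := by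
    have : Continuous fun p : (Fin d' → ℝ) × (Fin d' → ℝ) => ∑ k, |p.1 k - p.2 k| := by
      refine continuous_finset_sum _ fun k _ => ?_
      exact (((continuous_apply k).comp continuous_fst).sub
        ((continuous_apply k).comp continuous_snd)).abs
    exact measurableSet_lt this.measurable measurable_const
  rw [← hmp.map_eq, Measure.map_apply (MeasurableEquiv.measurable _) hSmeas]
  set ρ := Measure.pi fun _ : Fin d' => (unif1 ε).prod (unif1 ε) with hρ
  set B := (MeasurableEquiv.arrowProdEquivProdArrow ℝ ℝ (Fin d')) ⁻¹'
    {p : (Fin d' → ℝ) × (Fin d' → ℝ) | ∑ k, |p.1 k - p.2 k| < ε * (d' : ℝ) / 6} with hB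
  have hBeq : B = {w : Fin d' → ℝ × ℝ | ∑ k, |(w k).1 - (w k).2| < ε * (d' : ℝ) / 6} := by
    rw [hB]
    ext w
    simp [MeasurableEquiv.arrowProdEquivProdArrow, Equiv.arrowProdEquivProdArrow]
  -- Chernoff
  set g : ℝ × ℝ → ℝ≥0∞ := fun q => ENNReal.ofReal (Real.exp (-(|q.1 - q.2|/ε))) with hg
  have hgmeas : Measurable g := by
    refine ENNReal.measurable_ofReal.comp (Real.continuous_exp.comp ?_).measurable
    exact ((continuous_fst.sub continuous_snd).abs.div_const ε).neg
  have hBmeas : MeasurableSet B := (MeasurableEquiv.measurable _) hSmeas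
  have step1 : ρ B ≤ ∫⁻ w, ENNReal.ofReal (Real.exp ((d':ℝ)/6)) * ∏ k, g (w k) ∂ρ := by
    rw [← lintegral_indicator_one hBmeas]
    refine lintegral_mono fun w => ?_
    by_cases hw : w ∈ B
    · rw [Set.indicator_of_mem hw]
      have hwlt : ∑ k, |(w k).1 - (w k).2| < ε * (d' : ℝ) / 6 := by
        rw [hBeq] at hw; exact hw
      have hprod : (∏ k, g (w k)) = ENNReal.ofReal (Real.exp (-(∑ k, |(w k).1 - (w k).2|)/ε)) := by
        rw [hg]
        simp only []
        rw [← ENNReal.ofReal_prod_of_nonneg (fun k _ => (Real.exp_pos _).le), ← Real.exp_sum]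
        congr 1
        rw [neg_div, Finset.sum_div, ← Finset.sum_neg_distrib]
      rw [hprod, ← ENNReal.ofReal_mul (Real.exp_pos _).le, ← Real.exp_add]
      refine ENNReal.one_le_ofReal.mpr (Real.one_le_exp ?_)
      rw [neg_div]
      have h6 : (∑ k, |(w k).1 - (w k).2|)/ε < (d':ℝ)/6 := by
        rw [div_lt_iff₀ hε]
        calc ∑ k, |(w k).1 - (w k).2| < ε * (d' : ℝ) / 6 := hwlt
          _ = (d':ℝ)/6 * ε := by ring
      linarith
    · rw [Set.indicator_of_notMem hw]
      exact zero_le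
  refine step1.trans ?_
  rw [lintegral_const_mul' _ _ ENNReal.ofReal_ne_top, hρ, lintegral_pi_pow _ g hgmeas d']
  have h1 : (∫⁻ q, g q ∂((unif1 ε).prod (unif1 ε)))^d' ≤ ENNReal.ofReal (3/4) ^ d' :=
    pow_le_pow_left' (I_le hε) d'
  calc ENNReal.ofReal (Real.exp ((d':ℝ)/6)) * (∫⁻ q, g q ∂((unif1 ε).prod (unif1 ε)))^d'
      ≤ ENNReal.ofReal (Real.exp ((d':ℝ)/6)) * ENNReal.ofReal (3/4) ^ d' :=
        mul_le_mul_right h1 _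
    _ = ENNReal.ofReal (Real.exp ((d':ℝ)/6) * (3/4)^d') := by
        rw [← ENNReal.ofReal_pow (by norm_num), ← ENNReal.ofReal_mul (Real.exp_pos _).le]
    _ ≤ ENNReal.ofReal (Real.exp (-(d' : ℝ)/12)) := by
        refine ENNReal.ofReal_le_ofReal ?_
        have h34 : (3/4:ℝ) ≤ Real.exp (-(1/4)) := by
          rw [Real.exp_neg]
          have h2 := inv_anti₀ (Real.exp_pos _) exp_quarter
          calc (3/4 : ℝ) = (4/3 : ℝ)⁻¹ := by norm_num
            _ ≤ (Real.exp (1/4))⁻¹ := h2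
        have h3 : (3/4:ℝ)^d' ≤ Real.exp (-(1/4))^d' :=
          pow_le_pow_left₀ (by norm_num) h34 d'
        calc Real.exp ((d':ℝ)/6) * (3/4)^d'
            ≤ Real.exp ((d':ℝ)/6) * Real.exp (-(1/4))^d' :=
              mul_le_mul_of_nonneg_left h3 (Real.exp_pos _).le
          _ = Real.exp ((d':ℝ)/6 + (d':ℝ) * (-(1/4))) := by
              rw [← Real.exp_nat_mul, ← Real.exp_add]
          _ = Real.exp (-(d' : ℝ)/12) := by
              congr 1; ring

lemma partA {n : ℕ} (hn : 2 ≤ n) {ε : ℝ} (hε : 0 < ε) {d' : ℕ}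
    (hd : 36 * Real.log n ≤ (d' : ℝ)) :
    1 - ((n : ENNReal))⁻¹ ≤ (Measure.pi fun _ : Fin n => uniformCube d' ε)
      {zs : Fin n → Fin d' → ℝ | ∀ i j : Fin n, i ≠ j →
        ε * (d' : ℝ) / 6 ≤ ∑ k, |zs i k - zs j k|} := by
  classical
  haveI : IsProbabilityMeasure (unif1 ε) := unif1_isProb hε
  rw [uniformCube_eq_pi hε]
  set ν : Measure (Fin d' → ℝ) := Measure.pi fun _ : Fin d' => unif1 ε with hν
  set P : Measure (Fin n → Fin d' → ℝ) := Measure.pi fun _ : Fin n => ν with hP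
  haveI : IsProbabilityMeasure ν := by rw [hν]; infer_instance
  haveI : IsProbabilityMeasure P := by rw [hP]; infer_instance
  set good := {zs : Fin n → Fin d' → ℝ | ∀ i j : Fin n, i ≠ j →
    ε * (d' : ℝ) / 6 ≤ ∑ k, |zs i k - zs j k|} with hgood
  set A : Fin n → Fin n → Set (Fin n → Fin d' → ℝ) :=
    fun i j => {z | ∑ k, |z i k - z j k| < ε * (d' : ℝ) / 6} with hA
  set bad := ⋃ i, ⋃ j, ⋃ (_ : i ≠ j), A i j with hbad
  have hcover : Set.univ ⊆ good ∪ bad := by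
    intro z _
    by_cases hz : z ∈ good
    · exact Or.inl hz
    · refine Or.inr ?_
      rw [hgood] at hz
      simp only [Set.mem_setOf_eq, not_forall, not_le] at hz
      obtain ⟨i, j, hij, hlt⟩ := hz
      exact Set.mem_iUnion.2 ⟨i, Set.mem_iUnion.2 ⟨j, Set.mem_iUnion.2 ⟨hij, hlt⟩⟩⟩
  set p := ENNReal.ofReal (Real.exp (-(d' : ℝ)/12)) with hp
  have hpair : ∀ i j : Fin n, P (⋃ (_ : i ≠ j), A i j) ≤ p := by
    intro i j
    by_cases hij : i ≠ j
    · rw [Set.iUnion_eq_if, if_pos hij]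
      have hmap := map_pair_pi ν hij
      have hmeas : MeasurableSet {q : (Fin d' → ℝ) × (Fin d' → ℝ) |
          ∑ k, |q.1 k - q.2 k| < ε * (d' : ℝ) / 6} := by
        have : Continuous fun q : (Fin d' → ℝ) × (Fin d' → ℝ) => ∑ k, |q.1 k - q.2 k| := by
          refine continuous_finset_sum _ fun k _ => ?_
          exact (((continuous_apply k).comp continuous_fst).sub
            ((continuous_apply k).comp continuous_snd)).abs
        exact measurableSet_lt this.measurable measurable_const
      have hAeq : A i j = (fun z : Fin n → Fin d' → ℝ => (z i, z j)) ⁻¹'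
          {q : (Fin d' → ℝ) × (Fin d' → ℝ) | ∑ k, |q.1 k - q.2 k| < ε * (d' : ℝ) / 6} := rfl
      rw [hAeq, ← Measure.map_apply
        ((measurable_pi_apply i).prodMk (measurable_pi_apply j)) hmeas, hmap]
      exact pair_tail hε d'
    · rw [Set.iUnion_eq_if, if_neg hij]
      simp [hp]
  have h1 : ∀ i, P (⋃ j, ⋃ (_ : i ≠ j), A i j) ≤ (n : ℝ≥0∞) * p := by
    intro i
    refine (measure_iUnion_le _).trans ?_
    rw [tsum_fintype]
    calc ∑ j, P (⋃ (_ : i ≠ j), A i j) ≤ ∑ _j : Fin n, p :=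
          Finset.sum_le_sum fun j _ => hpair i j
      _ = (n : ℝ≥0∞) * p := by
          rw [Finset.sum_const, Finset.card_univ, Fintype.card_fin, nsmul_eq_mul]
  have hbadle : P bad ≤ (n : ℝ≥0∞) * ((n : ℝ≥0∞) * p) := by
    rw [hbad]
    refine (measure_iUnion_le _).trans ?_
    rw [tsum_fintype]
    calc ∑ i, P (⋃ j, ⋃ (_ : i ≠ j), A i j) ≤ ∑ _i : Fin n, (n : ℝ≥0∞) * p :=
          Finset.sum_le_sum fun i _ => h1 i
      _ = (n : ℝ≥0∞) * ((n : ℝ≥0∞) * p) := by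
          rw [Finset.sum_const, Finset.card_univ, Fintype.card_fin, nsmul_eq_mul]
  have hnpos : (0:ℝ) < n := by
    have : 0 < n := by omega
    exact_mod_cast this
  have hple : p ≤ ENNReal.ofReal (((n:ℝ)^3)⁻¹) := by
    rw [hp]
    refine ENNReal.ofReal_le_ofReal ?_
    have h2 : -(d':ℝ)/12 ≤ -(3*Real.log n) := by linarith
    refine (Real.exp_le_exp.mpr h2).trans (le_of_eq ?_)
    rw [show (3:ℝ)*Real.log (n:ℝ) = ((3:ℕ):ℝ)*Real.log (n:ℝ) by norm_num, Real.exp_neg,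
      Real.exp_nat_mul, Real.exp_log hnpos]
  have hnum : (n : ℝ≥0∞) * ((n : ℝ≥0∞) * ENNReal.ofReal (((n:ℝ)^3)⁻¹)) = ((n : ℝ≥0∞))⁻¹ := by
    rw [← ENNReal.ofReal_natCast n, ← ENNReal.ofReal_mul (by positivity),
      ← ENNReal.ofReal_mul (by positivity)]
    rw [show (n:ℝ) * ((n:ℝ) * (((n:ℝ))^3)⁻¹) = ((n:ℝ))⁻¹ by field_simp]
    rw [ENNReal.ofReal_inv_of_pos hnpos, ENNReal.ofReal_natCast]
  have hbad' : P bad ≤ ((n : ℝ≥0∞))⁻¹ := by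
    refine hbadle.trans ?_
    rw [← hnum]
    exact mul_le_mul_right (mul_le_mul_right hple _) _
  have htotal : (1:ℝ≥0∞) ≤ P good + P bad := by
    rw [← measure_univ (μ := P)]
    exact (measure_mono hcover).trans (measure_union_le _ _)
  rw [tsub_le_iff_right]
  exact htotal.trans (add_le_add_right hbad' _)

lemma exists_feasible {ι : Type} [Fintype ι] (b : ι → ℝ) (hb : ∑ i, b i = 0) :
    ∃ γ : ι → ι → ℝ, (∀ i j, 0 ≤ γ i j) ∧ (∀ i, ∑ j, γ i j = max (b i) 0) ∧
      (∀ j, ∑ i, γ i j = max (-(b j)) 0) := by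
  set T := ∑ i, max (b i) 0 with hTdef
  have hTnn : 0 ≤ T := Finset.sum_nonneg fun i _ => le_max_right _ _
  have hbneg : ∑ j, max (-(b j)) 0 = T := by
    have h1 : ∑ i, (max (b i) 0 - max (-(b i)) 0) = 0 := by
      simp_rw [max_zero_sub_max_neg_zero_eq_self]; exact hb
    rw [Finset.sum_sub_distrib] at h1
    linarith
  refine ⟨fun i j => max (b i) 0 * max (-(b j)) 0 / T, ?_, ?_, ?_⟩
  · intro i j
    exact div_nonneg (mul_nonneg (le_max_right _ _) (le_max_right _ _)) hTnn
  · intro i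
    rw [← Finset.sum_div, ← Finset.mul_sum, hbneg]
    rcases eq_or_lt_of_le hTnn with h | h
    · have : max (b i) 0 = 0 := by
        have := (Finset.sum_eq_zero_iff_of_nonneg
          (fun j (_ : j ∈ Finset.univ) => le_max_right (b j) 0)).1 h.symm
        exact this i (Finset.mem_univ i)
      simp [this]
    · field_simp
  · intro j
    rw [← Finset.sum_div, ← Finset.sum_mul, ← hTdef]
    rcases eq_or_lt_of_le hTnn with h | h
    · have : max (-(b j)) 0 = 0 := by
        have h2 := hbneg.trans h.symm
        have := (Finset.sum_eq_zero_iff_of_nonneg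
          (fun i (_ : i ∈ Finset.univ) => le_max_right (-(b i)) 0)).1 h2
        exact this j (Finset.mem_univ j)
      simp [this]
    · field_simp

lemma emd_sandwich {ι : Type} [Fintype ι] (c₁ e : ι → ι → ℝ)
    (hc₁ : ∀ i j, 0 ≤ c₁ i j) (he : ∀ i j, 0 ≤ e i j) {K T : ℝ}
    (heK : ∀ i j, e i j ≤ K) (hK : 0 ≤ K) (b : ι → ℝ) (hb : ∑ i, b i = 0)
    (hT : ∑ i, max (b i) 0 ≤ T) :
    EMDgen c₁ b ≤ EMDgen (fun i j => c₁ i j + e i j) b ∧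
    EMDgen (fun i j => c₁ i j + e i j) b ≤ EMDgen c₁ b + K * T := by
  classical
  set S₁ := { c : ℝ | ∃ γ : ι → ι → ℝ, (∀ i j, 0 ≤ γ i j) ∧
    (∀ i, ∑ j, γ i j = max (b i) 0) ∧ (∀ j, ∑ i, γ i j = max (-(b j)) 0) ∧
    c = ∑ i, ∑ j, γ i j * c₁ i j } with hS₁
  set S₂ := { c : ℝ | ∃ γ : ι → ι → ℝ, (∀ i j, 0 ≤ γ i j) ∧
    (∀ i, ∑ j, γ i j = max (b i) 0) ∧ (∀ j, ∑ i, γ i j = max (-(b j)) 0) ∧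
    c = ∑ i, ∑ j, γ i j * (c₁ i j + e i j) } with hS₂
  obtain ⟨γ₀, hγ₀, hrow₀, hcol₀⟩ := exists_feasible b hb
  have hne₁ : S₁.Nonempty := ⟨_, γ₀, hγ₀, hrow₀, hcol₀, rfl⟩
  have hne₂ : S₂.Nonempty := ⟨_, γ₀, hγ₀, hrow₀, hcol₀, rfl⟩
  have hbdd₁ : BddBelow S₁ := by
    refine ⟨0, ?_⟩
    rintro c ⟨γ, hγ, -, -, rfl⟩
    exact Finset.sum_nonneg fun i _ => Finset.sum_nonneg fun j _ =>
      mul_nonneg (hγ i j) (hc₁ i j)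
  have hbdd₂ : BddBelow S₂ := by
    refine ⟨0, ?_⟩
    rintro c ⟨γ, hγ, -, -, rfl⟩
    exact Finset.sum_nonneg fun i _ => Finset.sum_nonneg fun j _ =>
      mul_nonneg (hγ i j) (add_nonneg (hc₁ i j) (he i j))
  have key : ∀ γ : ι → ι → ℝ, (∀ i j, 0 ≤ γ i j) → (∀ i, ∑ j, γ i j = max (b i) 0) →
      ∑ i, ∑ j, γ i j * e i j ≤ K * T := by
    intro γ hγ hrow
    calc ∑ i, ∑ j, γ i j * e i j ≤ ∑ i, ∑ j, γ i j * K := by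
          refine Finset.sum_le_sum fun i _ => Finset.sum_le_sum fun j _ => ?_
          exact mul_le_mul_of_nonneg_left (heK i j) (hγ i j)
      _ = K * ∑ i, max (b i) 0 := by
          simp_rw [← Finset.sum_mul, hrow]
          rw [mul_comm]
      _ ≤ K * T := mul_le_mul_of_nonneg_left hT hK
  constructor
  · show sInf S₁ ≤ sInf S₂
    refine le_csInf hne₂ ?_
    rintro c ⟨γ, hγ, hrow, hcol, rfl⟩
    refine le_trans (csInf_le hbdd₁ ⟨γ, hγ, hrow, hcol, rfl⟩) ?_
    refine Finset.sum_le_sum fun i _ => Finset.sum_le_sum fun j _ => ?_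
    exact mul_le_mul_of_nonneg_left (le_add_of_nonneg_right (he i j)) (hγ i j)
  · show sInf S₂ ≤ sInf S₁ + K * T
    have h2 : ∀ c ∈ S₁, sInf S₂ - K * T ≤ c := by
      rintro c ⟨γ, hγ, hrow, hcol, rfl⟩
      have hmem : (∑ i, ∑ j, γ i j * (c₁ i j + e i j)) ∈ S₂ := ⟨γ, hγ, hrow, hcol, rfl⟩
      have h3 := csInf_le hbdd₂ hmem
      have h4 : ∑ i, ∑ j, γ i j * (c₁ i j + e i j)
          = (∑ i, ∑ j, γ i j * c₁ i j) + ∑ i, ∑ j, γ i j * e i j := by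
        rw [← Finset.sum_add_distrib]
        refine Finset.sum_congr rfl fun i _ => ?_
        rw [← Finset.sum_add_distrib]
        refine Finset.sum_congr rfl fun j _ => ?_
        ring
      have h5 := key γ hγ hrow
      linarith
    have := le_csInf hne₁ h2
    linarith

/-- (a) i.i.d. uniform noise vectors in `[0, ε]^{d'}` are pairwise at ℓ₁
distance at least `ε·d'/6` with probability at least `1 − 1/n`; (b) appending coordinates
from `[0, ε]^{d'}` changes the Earth Mover's Distance by at most `ε·d'·n` additively. -/
theorem noise_coordinates :
    ∃ C₀ : ℝ, 0 < C₀ ∧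
    ∀ (n : ℕ), 2 ≤ n → ∀ (ε : ℝ), 0 < ε →
    ∀ (d' : ℕ), C₀ * Real.log n ≤ (d' : ℝ) →
      ((1 - ((n : ENNReal))⁻¹ ≤
          (Measure.pi fun _ : Fin n => uniformCube d' ε)
            {zs : Fin n → Fin d' → ℝ | ∀ i j : Fin n, i ≠ j →
              ε * (d' : ℝ) / 6 ≤ ∑ k, |zs i k - zs j k|}) ∧
        (∀ (d : ℕ) (x : Fin n → Fin d → ℝ) (ζ : Fin n → Fin d' → ℝ),
          (∀ i k, ζ i k ∈ Set.Icc (0 : ℝ) ε) →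
          ∀ b : Fin n → ℝ, (∑ i, b i) = 0 → (∑ i, max (b i) 0) ≤ (n : ℝ) →
            EMDgen (fun i j => l1dist (x i) (x j)) b ≤
              EMDgen (fun i j => l1dist (x i) (x j) + l1dist (ζ i) (ζ j)) b ∧
            EMDgen (fun i j => l1dist (x i) (x j) + l1dist (ζ i) (ζ j)) b ≤
              EMDgen (fun i j => l1dist (x i) (x j)) b + ε * (d' : ℝ) * (n : ℝ))) := by
  refine ⟨36, by norm_num, ?_⟩
  intro n hn ε hε d' hd
  constructor
  · exact partA hn hε hd
  · intro d x ζ hζ b hb hbn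
    have hc : ∀ i j, 0 ≤ l1dist (x i) (x j) := fun i j =>
      Finset.sum_nonneg fun k _ => abs_nonneg _
    have he : ∀ i j, 0 ≤ l1dist (ζ i) (ζ j) := fun i j =>
      Finset.sum_nonneg fun k _ => abs_nonneg _
    have heK : ∀ i j, l1dist (ζ i) (ζ j) ≤ ε * (d' : ℝ) := by
      intro i j
      calc l1dist (ζ i) (ζ j) ≤ ∑ _k : Fin d', ε := by
            refine Finset.sum_le_sum fun k _ => ?_
            have h1 := hζ i k
            have h2 := hζ j k
            rw [abs_sub_le_iff]
            constructor <;> [linarith [h1.2, h2.1]; linarith [h2.2, h1.1]]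
        _ = ε * (d' : ℝ) := by
            rw [Finset.sum_const, Finset.card_univ, Fintype.card_fin, nsmul_eq_mul, mul_comm]
    have hK : 0 ≤ ε * (d' : ℝ) := by positivity
    have := emd_sandwich (fun i j => l1dist (x i) (x j)) (fun i j => l1dist (ζ i) (ζ j))
      hc he heK hK b hb hbn
    exact this
end

section
/- There is an absolute constant C such that the following holds for every integer n ≥ 1. Let a, b : [n] → [n] be nondecreasing functions and let Q = {(i,j) ∈ [n]×[n] : a(i) ≤ j ≤ b(i)}. Let s = ⌊n^{1/4}⌋. Then there exist an integer L ≥ 0 and subsets I₁,…,I_L ⊆ [n] and J₁,…,J_L ⊆ [n] with |I_ℓ| = |J_ℓ| = s for every ℓ, such that the combinatorial rectangles I₁×J₁, …, I_L×J_L are pairwise disjoint, each is contained in Q, and |Q ∖ ∪_{ℓ=1}^{L} (I_ℓ × J_ℓ)| ≤ C·n^{7/4}. -/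
open Finset

lemma card_valIco (n l u : ℕ) (hu : u ≤ n) :
    (univ.filter (fun i : Fin n => l ≤ i.val ∧ i.val < u)).card = u - l := by
  have h : univ.filter (fun i : Fin n => l ≤ i.val ∧ i.val < u)
      = (Finset.Ico l u).attachFin (fun m hm => lt_of_lt_of_le (Finset.mem_Ico.mp hm).2 hu) := by
    ext i; simp [Finset.mem_attachFin, Finset.mem_Ico]
  rw [h, Finset.card_attachFin, Nat.card_Ico]

lemma lt_div_succ_mul (a s : ℕ) (h : 0 < s) : a < (a / s + 1) * s := by
  have h1 := Nat.div_add_mod a s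
  have h2 := Nat.mod_lt a h
  have h3 : (a / s + 1) * s = a / s * s + s := by ring
  have h4 : a / s * s = s * (a / s) := mul_comm _ _
  omega

lemma tele_int (N s m : ℕ) (G : ℕ → ℤ) (hpos : ∀ j, 0 ≤ G j) (hN : ∀ j, G j ≤ N) :
    (∑ i ∈ range m, (G (i + s) - G i)) ≤ s * N := by
  have h1 : ∀ i : ℕ, G (i + s) - G i = ∑ j ∈ range s, (G ((i + j) + 1) - G (i + j)) := by
    intro i
    have h := Finset.sum_range_sub (fun j => G (i + j)) s
    simp only [← add_assoc] at h
    rw [h]; simp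
  calc ∑ i ∈ range m, (G (i + s) - G i)
      = ∑ i ∈ range m, ∑ j ∈ range s, (G ((i + j) + 1) - G (i + j)) :=
        Finset.sum_congr rfl fun i _ => h1 i
    _ = ∑ j ∈ range s, ∑ i ∈ range m, (G ((i + j) + 1) - G (i + j)) := Finset.sum_comm
    _ ≤ ∑ j ∈ range s, (N : ℤ) := by
        apply Finset.sum_le_sum
        intro j _
        have h2 : ∑ i ∈ range m, (G ((i + j) + 1) - G (i + j)) = G (m + j) - G (0 + j) := by
          have h := Finset.sum_range_sub (fun i => G (i + j)) m
          simpa [add_right_comm] using h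
        rw [h2]
        have := hN (m + j); have := hpos (0 + j); linarith
    _ = s * N := by simp [mul_comm]

lemma tele (N s m : ℕ) (g : ℕ → ℕ) (hg : Monotone g) (hN : ∀ j, g j ≤ N) :
    ∑ i ∈ range m, (g (i + s) - g i) ≤ s * N := by
  have key := tele_int N s m (fun j => (g j : ℤ)) (fun j => by positivity)
    (fun j => by simpa using hN j)
  have hc : ((∑ i ∈ range m, (g (i + s) - g i) : ℕ) : ℤ)
      = ∑ i ∈ range m, ((g (i + s) : ℤ) - g i) := by
    rw [Nat.cast_sum]
    exact Finset.sum_congr rfl fun i _ => Nat.cast_sub (hg (Nat.le_add_right i s))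
  have h2 : ((∑ i ∈ range m, (g (i + s) - g i) : ℕ) : ℤ) ≤ ((s * N : ℕ) : ℤ) := by
    rw [hc]; exact le_trans key (by push_cast; exact le_refl _)
  exact_mod_cast h2

lemma prod_disjoint_of {α β : Type*} [DecidableEq α] [DecidableEq β]
    (X X' : Finset α) (Y Y' : Finset β) (h : Disjoint X X' ∨ Disjoint Y Y') :
    Disjoint (X ×ˢ Y) (X' ×ˢ Y') := by
  rw [Finset.disjoint_left]
  intro p hp hp'
  rw [Finset.mem_product] at hp hp'
  rcases h with h | h
  · exact (Finset.disjoint_left.mp h hp.1) hp'.1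
  · exact (Finset.disjoint_left.mp h hp.2) hp'.2

/-- any "staircase" region `Q = {(i,j) : a(i) ≤ j ≤ b(i)}` with `a, b`
nondecreasing can be tiled by pairwise-disjoint `s × s` combinatorial rectangles
(`s = ⌊n^{1/4}⌋`) contained in `Q`, leaving at most `C·n^{7/4}` uncovered pairs. -/
theorem staircase_tiling :
    ∃ C : ℝ, 0 < C ∧
    ∀ (n : ℕ), 1 ≤ n →
    ∀ (a b : Fin n → Fin n), Monotone a → Monotone b →
    ∀ (Q : Finset (Fin n × Fin n)),
      Q = Finset.univ.filter (fun p => a p.1 ≤ p.2 ∧ p.2 ≤ b p.1) →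
      ∃ (L : ℕ) (I J : Fin L → Finset (Fin n)),
        (∀ ℓ, (I ℓ).card = ⌊(n : ℝ) ^ ((1 : ℝ) / 4)⌋₊ ∧
              (J ℓ).card = ⌊(n : ℝ) ^ ((1 : ℝ) / 4)⌋₊) ∧
        (∀ ℓ ℓ', ℓ ≠ ℓ' → Disjoint ((I ℓ) ×ˢ (J ℓ)) ((I ℓ') ×ˢ (J ℓ'))) ∧
        (∀ ℓ, (I ℓ) ×ˢ (J ℓ) ⊆ Q) ∧
        (((Q \ Finset.univ.biUnion fun ℓ => (I ℓ) ×ˢ (J ℓ)).card : ℝ) ≤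
          C * (n : ℝ) ^ ((7 : ℝ) / 4)) := by
  refine ⟨4, by norm_num, ?_⟩
  intro n hn a b ha hb Q hQ
  have hn1 : (1 : ℝ) ≤ (n : ℝ) := by exact_mod_cast hn
  set s : ℕ := ⌊(n : ℝ) ^ ((1 : ℝ) / 4)⌋₊ with hs_def
  have hs1 : 1 ≤ s := by
    apply Nat.le_floor
    rw [Nat.cast_one]
    exact Real.one_le_rpow hn1 (by norm_num)
  have hspos : 0 < s := hs1
  set K : ℕ := n / s with hK_def
  have hsK : s * K ≤ n := by
    have h1 := Nat.div_mul_le_self n s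
    have h2 : s * K = K * s := mul_comm _ _
    rw [hK_def] at *
    omega
  -- extended monotone endpoint functions
  set g : ℕ → ℕ := fun i => if h : i < n then (a ⟨i, h⟩).val else n with hg_def
  set f : ℕ → ℕ := fun i => if h : i < n then (b ⟨i, h⟩).val + 1 else n with hf_def
  have hgval : ∀ i : Fin n, g i.val = (a i).val := by
    intro i; simp only [hg_def, dif_pos i.isLt, Fin.eta]
  have hfval : ∀ i : Fin n, f i.val = (b i).val + 1 := by
    intro i; simp only [hf_def, dif_pos i.isLt, Fin.eta]
  have hgle : ∀ j, g j ≤ n := by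
    intro j; simp only [hg_def]
    split
    · exact le_of_lt (Fin.is_lt _)
    · exact le_rfl
  have hfle : ∀ j, f j ≤ n := by
    intro j; simp only [hf_def]
    split
    · exact (Fin.is_lt _)
    · exact le_rfl
  have hgmono : Monotone g := by
    intro x y hxy
    simp only [hg_def]
    by_cases hy : y < n
    · have hx : x < n := lt_of_le_of_lt hxy hy
      simp only [dif_pos hx, dif_pos hy]
      exact ha (by rwa [Fin.mk_le_mk])
    · by_cases hx : x < n
      · simp only [dif_pos hx, dif_neg hy]
        exact le_of_lt (Fin.is_lt _)
      · simp only [dif_neg hx, dif_neg hy]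
        exact le_rfl
  have hfmono : Monotone f := by
    intro x y hxy
    simp only [hf_def]
    by_cases hy : y < n
    · have hx : x < n := lt_of_le_of_lt hxy hy
      simp only [dif_pos hx, dif_pos hy]
      have : b ⟨x, hx⟩ ≤ b ⟨y, hy⟩ := hb (by rwa [Fin.mk_le_mk])
      omega
    · by_cases hx : x < n
      · simp only [dif_pos hx, dif_neg hy]
        exact (Fin.is_lt _)
      · simp only [dif_neg hx, dif_neg hy]
        exact le_rfl
  set A : ℕ → ℕ := fun k => g (s * k + s - 1) with hA_def
  set B : ℕ → ℕ := fun k => f (s * k) with hB_def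
  set T : ℕ → ℕ := fun k => (B k - A k) / s with hT_def
  set Ib : ℕ → Finset (Fin n) :=
    fun k => univ.filter (fun i : Fin n => s * k ≤ i.val ∧ i.val < s * k + s) with hIb_def
  set Jb : ℕ → ℕ → Finset (Fin n) :=
    fun k t => univ.filter (fun j : Fin n => A k + t * s ≤ j.val ∧ j.val < A k + t * s + s)
    with hJb_def
  have hkn : ∀ k, k < K → s * k + s ≤ n := by
    intro k hk
    calc s * k + s = s * (k + 1) := by ring
    _ ≤ s * K := Nat.mul_le_mul_left s hk
    _ ≤ n := hsK
  have hBn : ∀ k, B k ≤ n := fun k => hfle _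
  have hAn : ∀ k, A k ≤ n := fun k => hgle _
  have hABle : ∀ k t, t < T k → A k + t * s + s ≤ B k := by
    intro k t ht
    have h1 : (t + 1) * s ≤ T k * s := Nat.mul_le_mul_right s ht
    have h2 : T k * s ≤ B k - A k := by rw [hT_def]; exact Nat.div_mul_le_self _ _
    have h3 : B k < A k → T k = 0 := by
      intro h
      rw [hT_def]
      simp [Nat.sub_eq_zero_of_le (le_of_lt h)]
    have h0 : (t + 1) * s = t * s + s := by ring
    omega
  have hIbcard : ∀ k, k < K → (Ib k).card = s := by
    intro k hk
    rw [hIb_def]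
    rw [card_valIco n _ _ (hkn k hk)]
    omega
  have hJbcard : ∀ k t, t < T k → (Jb k t).card = s := by
    intro k t ht
    have h1 := hABle k t ht
    have h2 := hBn k
    rw [hJb_def]
    rw [card_valIco n _ _ (by omega)]
    omega
  -- containment in Q
  have hsubQ : ∀ k t, k < K → t < T k → Ib k ×ˢ Jb k t ⊆ Q := by
    intro k t hk ht p hp
    rw [Finset.mem_product] at hp
    obtain ⟨hp1, hp2⟩ := hp
    rw [hIb_def] at hp1
    rw [hJb_def] at hp2
    simp only [mem_filter, mem_univ, true_and] at hp1 hp2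
    rw [hQ, mem_filter]
    have hkn' := hkn k hk
    refine ⟨mem_univ _, ?_, ?_⟩
    · rw [Fin.le_def]
      have h1 : s * k + s - 1 < n := by omega
      have h2 : (a p.1).val ≤ (a ⟨s * k + s - 1, h1⟩).val := by
        apply ha
        rw [Fin.le_def]
        simp only [Fin.val_mk]
        omega
      have h3 : A k = (a ⟨s * k + s - 1, h1⟩).val := hgval ⟨s * k + s - 1, h1⟩
      omega
    · rw [Fin.le_def]
      have h1 : s * k < n := by omega
      have h2 : (b ⟨s * k, h1⟩).val ≤ (b p.1).val := by
        apply hb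
        rw [Fin.le_def]
        simp only [Fin.val_mk]
        omega
      have h3 : B k = (b ⟨s * k, h1⟩).val + 1 := hfval ⟨s * k, h1⟩
      have h4 := hABle k t ht
      omega
  -- disjointness of blocks
  have hIdisj : ∀ k k', k ≠ k' → Disjoint (Ib k) (Ib k') := by
    intro k k' hkk
    rw [Finset.disjoint_left]
    intro x hx hx'
    rw [hIb_def] at hx hx'
    simp only [mem_filter, mem_univ, true_and] at hx hx'
    rcases Nat.lt_or_ge k k' with h | h
    · have h1 : s * (k + 1) ≤ s * k' := Nat.mul_le_mul_left s h
      have h2 : s * (k + 1) = s * k + s := by ring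
      omega
    · have h0 : k' < k := by omega
      have h1 : s * (k' + 1) ≤ s * k := Nat.mul_le_mul_left s h0
      have h2 : s * (k' + 1) = s * k' + s := by ring
      omega
  have hJdisj : ∀ k t t', t ≠ t' → Disjoint (Jb k t) (Jb k t') := by
    intro k t t' htt
    rw [Finset.disjoint_left]
    intro x hx hx'
    rw [hJb_def] at hx hx'
    simp only [mem_filter, mem_univ, true_and] at hx hx'
    rcases Nat.lt_or_ge t t' with h | h
    · have h1 : (t + 1) * s ≤ t' * s := Nat.mul_le_mul_right s h
      have h2 : (t + 1) * s = t * s + s := by ring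
      omega
    · have h0 : t' < t := by omega
      have h1 : (t' + 1) * s ≤ t * s := Nat.mul_le_mul_right s h0
      have h2 : (t' + 1) * s = t' * s + s := by ring
      omega
  -- the index set
  set P : Finset (ℕ × ℕ) := (range K ×ˢ range n).filter (fun p => p.2 < T p.1) with hP_def
  have hmemP : ∀ p : ℕ × ℕ, p ∈ P ↔ (p.1 < K ∧ p.2 < n) ∧ p.2 < T p.1 := by
    intro p
    rw [hP_def]
    simp [Finset.mem_filter, Finset.mem_product]
  set e := P.equivFin with he_def
  set R : ℕ × ℕ → Finset (Fin n × Fin n) := fun p => Ib p.1 ×ˢ Jb p.1 p.2 with hR_def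
  refine ⟨P.card, fun ℓ => Ib ((e.symm ℓ).val).1,
    fun ℓ => Jb ((e.symm ℓ).val).1 ((e.symm ℓ).val).2, ?_, ?_, ?_, ?_⟩
  · intro ℓ
    have hp := (e.symm ℓ).2
    rw [hmemP] at hp
    exact ⟨hIbcard _ hp.1.1, hJbcard _ _ hp.2⟩
  · intro ℓ ℓ' hll
    have hne : ((e.symm ℓ).val) ≠ ((e.symm ℓ').val) := by
      intro h
      exact hll (by
        have := Subtype.ext h
        have h2 := congrArg e this
        simpa using h2)
    by_cases h1 : ((e.symm ℓ).val).1 = ((e.symm ℓ').val).1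
    · refine prod_disjoint_of _ _ _ _ (Or.inr ?_)
      show Disjoint (Jb ((e.symm ℓ).val).1 ((e.symm ℓ).val).2)
        (Jb ((e.symm ℓ').val).1 ((e.symm ℓ').val).2)
      rw [h1]
      exact hJdisj _ _ _ (fun h2 => hne (Prod.ext h1 h2))
    · exact prod_disjoint_of _ _ _ _ (Or.inl (hIdisj _ _ h1))
  · intro ℓ
    have hp := (e.symm ℓ).2
    rw [hmemP] at hp
    exact hsubQ _ _ hp.1.1 hp.2
  -- the counting estimate
  have hbiU : (univ.biUnion fun ℓ : Fin P.card =>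
      Ib ((e.symm ℓ).val).1 ×ˢ Jb ((e.symm ℓ).val).1 ((e.symm ℓ).val).2) = P.biUnion R := by
    ext x
    simp only [Finset.mem_biUnion, mem_univ, true_and]
    constructor
    · rintro ⟨ℓ, hx⟩
      exact ⟨(e.symm ℓ).val, (e.symm ℓ).2, hx⟩
    · rintro ⟨p, hp, hx⟩
      refine ⟨e ⟨p, hp⟩, ?_⟩
      rw [hR_def] at hx
      simpa [Equiv.symm_apply_apply] using hx
  rw [hbiU]
  set U := Q \ P.biUnion R with hU_def
  -- covering fact
  have hcov : ∀ i j : Fin n, i.val < s * K →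
      A (i.val / s) ≤ j.val → j.val < A (i.val / s) + T (i.val / s) * s →
      (i, j) ∈ P.biUnion R := by
    intro i j hi hj1 hj2
    set k := i.val / s with hk
    set t := (j.val - A k) / s with ht
    have hkK : k < K := by
      rw [hk, Nat.div_lt_iff_lt_mul hspos]
      have h1 : K * s = s * K := mul_comm _ _
      omega
    have htT : t < T k := by
      rw [ht, Nat.div_lt_iff_lt_mul hspos]
      omega
    have h3 : t * s ≤ j.val - A k := by rw [ht]; exact Nat.div_mul_le_self _ _
    have h4 : j.val - A k < (t + 1) * s := by rw [ht]; exact lt_div_succ_mul _ _ hspos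
    have h5 : (t + 1) * s = t * s + s := by ring
    have h6 : s * k ≤ i.val := by
      rw [hk]
      have := Nat.div_mul_le_self i.val s
      have h : i.val / s * s = s * (i.val / s) := mul_comm _ _
      omega
    have h7 : i.val < s * k + s := by
      rw [hk]
      have := lt_div_succ_mul i.val s hspos
      have h : (i.val / s + 1) * s = s * (i.val / s) + s := by ring
      omega
    rw [Finset.mem_biUnion]
    refine ⟨(k, t), ?_, ?_⟩
    · rw [hmemP]
      have h8 : T k ≤ B k - A k := by rw [hT_def]; exact Nat.div_le_self _ _
      have h9 := hBn k
      exact ⟨⟨hkK, by omega⟩, htT⟩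
    · rw [hR_def, Finset.mem_product]
      constructor
      · rw [hIb_def]
        simp only [mem_filter, mem_univ, true_and]
        exact ⟨h6, h7⟩
      · rw [hJb_def]
        simp only [mem_filter, mem_univ, true_and]
        omega
  -- row decomposition
  have hrow : U.card = ∑ i : Fin n, (U.filter (fun p => p.1 = i)).card :=
    Finset.card_eq_sum_card_fiberwise (fun p _ => mem_univ p.1)
  have hfib_le_n : ∀ i : Fin n, (U.filter (fun p => p.1 = i)).card ≤ n := by
    intro i
    have h := Finset.card_le_card_of_injOn (s := U.filter (fun p => p.1 = i))
      (t := (univ : Finset (Fin n))) Prod.snd (fun p _ => Finset.mem_univ p.2)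
      (by
        intro p hp q hq hpq
        simp only [Finset.mem_coe, Finset.mem_filter] at hp hq
        exact Prod.ext (hp.2.trans hq.2.symm) hpq)
    simpa using h
  set f2 : ℕ → ℕ := fun x => f (x - s) with hf2_def
  have hf2mono : Monotone f2 := fun x y h => hfmono (Nat.sub_le_sub_right h s)
  have hf2le : ∀ j, f2 j ≤ n := fun j => hfle _
  -- main per-row bound
  have hfib : ∀ i : Fin n, i.val < s * K →
      (U.filter (fun p => p.1 = i)).card ≤
        (g (i.val + s) - g i.val) + (f2 (i.val + s) - f2 i.val) + s := by
    intro i hi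
    set k := i.val / s with hk
    have hkK : k < K := by
      rw [hk, Nat.div_lt_iff_lt_mul hspos]
      have h1 : K * s = s * K := mul_comm _ _
      omega
    have h6 : s * k ≤ i.val := by
      rw [hk]
      have := Nat.div_mul_le_self i.val s
      have h : i.val / s * s = s * (i.val / s) := mul_comm _ _
      omega
    have h7 : i.val < s * k + s := by
      rw [hk]
      have := lt_div_succ_mul i.val s hspos
      have h : (i.val / s + 1) * s = s * (i.val / s) + s := by ring
      omega
    have hkn' := hkn k hkK
    set Xi := univ.filter (fun j : Fin n => g i.val ≤ j.val ∧ j.val < f i.val) with hXi_def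
    set Yi := univ.filter (fun j : Fin n => A k ≤ j.val ∧ j.val < A k + T k * s) with hYi_def
    have hgA : g i.val ≤ A k := by rw [hA_def]; exact hgmono (by omega)
    have hAg : A k ≤ g (i.val + s) := by rw [hA_def]; exact hgmono (by omega)
    have hfB : B k ≤ f i.val := by rw [hB_def]; exact hfmono h6
    have hBf2 : f (i.val - s) ≤ B k := by rw [hB_def]; exact hfmono (by omega)
    have hTs : T k ≠ 0 → A k + T k * s ≤ B k := by
      intro hT0
      have h1 := hABle k (T k - 1) (by omega)
      have h2 : T k - 1 + 1 = T k := by omega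
      have h3 : (T k - 1) * s + s = (T k - 1 + 1) * s := by ring
      rw [h2] at h3
      omega
    have hYX : Yi ⊆ Xi := by
      intro j hj
      rw [hYi_def] at hj
      rw [hXi_def]
      simp only [mem_filter, mem_univ, true_and] at hj ⊢
      have hT0 : T k ≠ 0 := by
        intro h
        rw [h] at hj
        simp at hj
        omega
      have := hTs hT0
      omega
    have hXcard : Xi.card = f i.val - g i.val := by
      rw [hXi_def, card_valIco n _ _ (hfle _)]
    have hYcard : Yi.card = T k * s := by
      have hun : A k + T k * s ≤ n := by
        by_cases hT0 : T k = 0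
        · have : T k * s = 0 := by rw [hT0]; ring
          have := hAn k
          omega
        · have := hTs hT0
          have := hBn k
          omega
      rw [hYi_def, card_valIco n _ _ hun]
      omega
    have hinj : (U.filter (fun p => p.1 = i)).card ≤ (Xi \ Yi).card := by
      apply Finset.card_le_card_of_injOn Prod.snd
      · intro p hp
        simp only [Finset.mem_coe, Finset.mem_filter] at hp
        obtain ⟨hpU, hpi⟩ := hp
        rw [hU_def, Finset.mem_sdiff] at hpU
        obtain ⟨hpQ, hpnc⟩ := hpU
        rw [Finset.mem_coe, Finset.mem_sdiff]
        constructor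
        · rw [hQ, mem_filter] at hpQ
          rw [hXi_def]
          simp only [mem_filter, mem_univ, true_and]
          have h1 := hpQ.2.1
          have h2 := hpQ.2.2
          rw [Fin.le_def] at h1 h2
          rw [hpi] at h1 h2
          have hg1 := hgval i
          have hf1 := hfval i
          omega
        · intro hY
          rw [hYi_def] at hY
          simp only [mem_filter, mem_univ, true_and] at hY
          apply hpnc
          have hc := hcov i p.2 hi hY.1 hY.2
          have hp_eq : p = (i, p.2) := Prod.ext hpi rfl
          rw [hp_eq]
          exact hc
      · intro p hp q hq hpq
        simp only [Finset.mem_coe, Finset.mem_filter] at hp hq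
        exact Prod.ext (hp.2.trans hq.2.symm) hpq
    have hsd : (Xi \ Yi).card = Xi.card - Yi.card := Finset.card_sdiff_of_subset hYX
    have hBA : B k < A k + T k * s + s := by
      have h4 : B k - A k < (T k + 1) * s := by
        rw [hT_def]
        exact lt_div_succ_mul _ _ hspos
      have h5 : (T k + 1) * s = T k * s + s := by ring
      omega
    have hf2a : f2 (i.val + s) = f i.val := by
      rw [hf2_def]
      simp only []
      congr 1
      omega
    have hf2b : f2 i.val = f (i.val - s) := by rw [hf2_def]
    omega
  -- sum everything
  have hsplit := Finset.sum_filter_add_sum_filter_not univ (fun i : Fin n => i.val < s * K)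
    (fun i => (U.filter (fun p => p.1 = i)).card)
  set φ : ℕ → ℕ := fun x => (g (x + s) - g x) + (f2 (x + s) - f2 x) + s with hφ_def
  have hS1 : ∑ i ∈ univ.filter (fun i : Fin n => i.val < s * K),
      (U.filter (fun p => p.1 = i)).card ≤ ∑ x ∈ range n, φ x := by
    calc ∑ i ∈ univ.filter (fun i : Fin n => i.val < s * K),
        (U.filter (fun p => p.1 = i)).card
        ≤ ∑ i ∈ univ.filter (fun i : Fin n => i.val < s * K), φ i.val := by
          apply Finset.sum_le_sum
          intro i hi
          rw [Finset.mem_filter] at hi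
          rw [hφ_def]
          exact hfib i hi.2
      _ ≤ ∑ i : Fin n, φ i.val := Finset.sum_le_sum_of_subset (Finset.filter_subset _ _)
      _ = ∑ x ∈ range n, φ x := Fin.sum_univ_eq_sum_range φ n
  have htele1 : ∑ x ∈ range n, (g (x + s) - g x) ≤ s * n := tele n s n g hgmono hgle
  have htele2 : ∑ x ∈ range n, (f2 (x + s) - f2 x) ≤ s * n := tele n s n f2 hf2mono hf2le
  have hφsum : ∑ x ∈ range n, φ x ≤ s * n + s * n + n * s := by
    rw [hφ_def]
    rw [Finset.sum_add_distrib, Finset.sum_add_distrib]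
    have h3 : ∑ _x ∈ range n, s = n * s := by
      rw [Finset.sum_const, Finset.card_range, smul_eq_mul]
    exact add_le_add (add_le_add htele1 htele2) (le_of_eq h3)
  have hS2 : ∑ i ∈ univ.filter (fun i : Fin n => ¬ i.val < s * K),
      (U.filter (fun p => p.1 = i)).card ≤ s * n := by
    have hcard : (univ.filter (fun i : Fin n => ¬ i.val < s * K)).card ≤ s := by
      have heq : univ.filter (fun i : Fin n => ¬ i.val < s * K)
          = univ.filter (fun i : Fin n => s * K ≤ i.val ∧ i.val < n) := by
        ext i
        simp only [mem_filter, mem_univ, true_and]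
        have := i.isLt
        omega
      rw [heq, card_valIco n _ _ le_rfl]
      have h1 := lt_div_succ_mul n s hspos
      have h2 : (n / s + 1) * s = s * (n / s) + s := by ring
      rw [hK_def]
      omega
    calc ∑ i ∈ univ.filter (fun i : Fin n => ¬ i.val < s * K),
        (U.filter (fun p => p.1 = i)).card
        ≤ (univ.filter (fun i : Fin n => ¬ i.val < s * K)).card • n :=
          Finset.sum_le_card_nsmul _ _ n (fun i _ => hfib_le_n i)
      _ = (univ.filter (fun i : Fin n => ¬ i.val < s * K)).card * n := by rw [smul_eq_mul]
      _ ≤ s * n := Nat.mul_le_mul_right n hcard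
  have hUcard : U.card ≤ 4 * (s * n) := by
    rw [hrow, ← hsplit]
    have := le_trans hS1 hφsum
    have hmc : n * s = s * n := mul_comm _ _
    omega
  -- convert to real bound
  have hsr : (s : ℝ) ≤ (n : ℝ) ^ ((1 : ℝ) / 4) := by
    rw [hs_def]
    exact Nat.floor_le (Real.rpow_nonneg (by positivity) _)
  have h0n : (0 : ℝ) < n := by linarith
  calc ((U.card : ℝ)) ≤ ((4 * (s * n) : ℕ) : ℝ) := by exact_mod_cast hUcard
    _ = 4 * ((s : ℝ) * n) := by push_cast; ring
    _ ≤ 4 * ((n : ℝ) ^ ((1 : ℝ) / 4) * n) := by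
        apply mul_le_mul_of_nonneg_left _ (by norm_num)
        exact mul_le_mul_of_nonneg_right hsr (by positivity)
    _ = 4 * (n : ℝ) ^ ((5 : ℝ) / 4) := by
        have h : (n : ℝ) ^ ((5 : ℝ) / 4) = (n : ℝ) ^ ((1 : ℝ) / 4) * (n : ℝ) := by
          rw [show (5 : ℝ) / 4 = 1 / 4 + 1 by norm_num, Real.rpow_add h0n, Real.rpow_one]
        rw [h]
    _ ≤ 4 * (n : ℝ) ^ ((7 : ℝ) / 4) := by
        apply mul_le_mul_of_nonneg_left _ (by norm_num)
        exact Real.rpow_le_rpow_of_exponent_le hn1 (by norm_num)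
end

section
/- Let n, s ≥ 1 be integers, let V be a finite set, let u, v : [n] → V, let c > 0, and let C ∈ ℝ^{n×n} have positive entries with C_{ij} ≥ c whenever u(i) ≠ v(j). Let λ be a probability distribution on [n]×[n]×{−1,1}, and let (i₁,j₁,σ₁),…,(i_s,j_s,σ_s) be i.i.d. samples from λ. For w ∈ V and k ∈ [s], set Z_w^k = (1{u(i_k) = w} − 1{v(j_k) = w})·σ_k/C_{i_k j_k}. Then E[ Σ_{w∈V} | (1/s)·Σ_{k=1}^{s} Z_w^k − E[Z_w^1] | ] ≤ 2·√n/(c·√s). -/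
open Finset

/-- The sign `σ ∈ {−1, 1}`, encoded by a boolean. -/
def sg (σ : Bool) : ℝ := if σ then 1 else -1

section helpers
variable {α : Type*} [Fintype α] {s : ℕ}

/-- Sum over functions of a product factorizes. -/
lemma sum_prod_eval (g : Fin s → α → ℝ) :
    ∑ ω : Fin s → α, ∏ k, g k (ω k) = ∏ k, ∑ a, g k a := by
  classical
  rw [Finset.prod_univ_sum]
  rw [Fintype.piFinset_univ]

variable (lam : α → ℝ)

/-- Expectation of a single-coordinate function under product measure. -/
lemma exp_single (hsum : ∑ a, lam a = 1) (f : α → ℝ) (k₀ : Fin s) :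
    ∑ ω : Fin s → α, (∏ k, lam (ω k)) * f (ω k₀) = ∑ a, lam a * f a := by
  classical
  have h1 : ∀ ω : Fin s → α, (∏ k, lam (ω k)) * f (ω k₀)
      = ∏ k, (lam (ω k) * (if k = k₀ then f (ω k) else 1)) := by
    intro ω
    rw [Finset.prod_mul_distrib, Finset.prod_ite_eq' Finset.univ k₀
      (fun k => f (ω k))]
    simp
  simp_rw [h1]
  rw [sum_prod_eval (fun k a => lam a * (if k = k₀ then f a else 1))]
  have h2 : ∀ k : Fin s, (∑ a, lam a * (if k = k₀ then f a else 1))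
      = if k = k₀ then (∑ a, lam a * f a) else 1 := by
    intro k
    by_cases h : k = k₀ <;> simp [h, hsum]
  simp_rw [h2]
  rw [Finset.prod_ite_eq' Finset.univ k₀ (fun _ => ∑ a, lam a * f a)]
  simp

/-- Expectation of a product of two distinct-coordinate functions. -/
lemma exp_pair (hsum : ∑ a, lam a = 1) (f g : α → ℝ) (k₀ l₀ : Fin s) (hkl : k₀ ≠ l₀) :
    ∑ ω : Fin s → α, (∏ k, lam (ω k)) * (f (ω k₀) * g (ω l₀))
      = (∑ a, lam a * f a) * (∑ a, lam a * g a) := by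
  classical
  have h1 : ∀ ω : Fin s → α, (∏ k, lam (ω k)) * (f (ω k₀) * g (ω l₀))
      = ∏ k, (lam (ω k) * ((if k = k₀ then f (ω k) else 1) *
          (if k = l₀ then g (ω k) else 1))) := by
    intro ω
    simp_rw [Finset.prod_mul_distrib]
    rw [Finset.prod_ite_eq' Finset.univ k₀ (fun k => f (ω k)),
        Finset.prod_ite_eq' Finset.univ l₀ (fun k => g (ω k))]
    simp [mul_assoc]
  simp_rw [h1]
  rw [sum_prod_eval (fun k a => lam a * ((if k = k₀ then f a else 1) * (if k = l₀ then g a else 1)))]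
  have h2 : ∀ k : Fin s,
      (∑ a, lam a * ((if k = k₀ then f a else 1) * (if k = l₀ then g a else 1)))
      = if k = k₀ then (∑ a, lam a * f a) else
          (if k = l₀ then (∑ a, lam a * g a) else 1) := by
    intro k
    by_cases h : k = k₀
    · subst h
      simp [if_neg hkl]
    · by_cases h' : k = l₀ <;> simp [h, h', hsum, Ne.symm hkl]
  simp_rw [h2]
  rw [← Finset.mul_prod_erase Finset.univ _ (Finset.mem_univ k₀), if_pos rfl]
  rw [← Finset.mul_prod_erase (Finset.univ.erase k₀) _
    (Finset.mem_erase.mpr ⟨hkl.symm, Finset.mem_univ l₀⟩)]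
  rw [if_neg (Ne.symm hkl), if_pos rfl]
  have h3 : ∀ k ∈ (Finset.univ.erase k₀).erase l₀,
      (if k = k₀ then (∑ a, lam a * f a) else
        (if k = l₀ then (∑ a, lam a * g a) else 1)) = 1 := by
    intro k hk
    simp only [Finset.mem_erase] at hk
    rw [if_neg hk.2.1, if_neg hk.1]
  rw [Finset.prod_eq_one h3]
  ring

/-- Jensen/Cauchy–Schwarz: `E|f| ≤ √(E f²)`. -/
lemma exp_abs_le_sqrt {ι : Type*} [Fintype ι] (p f : ι → ℝ)
    (hp : ∀ i, 0 ≤ p i) (hp1 : ∑ i, p i = 1) :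
    ∑ i, p i * |f i| ≤ Real.sqrt (∑ i, p i * f i ^ 2) := by
  have hnn : 0 ≤ ∑ i, p i * |f i| :=
    Finset.sum_nonneg fun i _ => mul_nonneg (hp i) (abs_nonneg _)
  rw [Real.le_sqrt hnn]
  · have h := Finset.sum_mul_sq_le_sq_mul_sq Finset.univ
      (fun i => Real.sqrt (p i)) (fun i => Real.sqrt (p i) * |f i|)
    have e1 : ∀ i : ι, Real.sqrt (p i) * (Real.sqrt (p i) * |f i|) = p i * |f i| := by
      intro i
      rw [← mul_assoc, Real.mul_self_sqrt (hp i)]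
    have e2 : ∀ i : ι, Real.sqrt (p i) ^ 2 = p i := fun i => Real.sq_sqrt (hp i)
    have e3 : ∀ i : ι, (Real.sqrt (p i) * |f i|) ^ 2 = p i * f i ^ 2 := by
      intro i
      rw [mul_pow, Real.sq_sqrt (hp i), sq_abs]
    simp_rw [e1, e2, e3] at h
    rw [hp1, one_mul] at h
    exact h
  · exact Finset.sum_nonneg fun i _ => mul_nonneg (hp i) (sq_nonneg _)

end helpers

lemma sg_sq' (σ : Bool) : sg σ ^ 2 = 1 := by cases σ <;> simp [sg]

section more
variable {α : Type*} [Fintype α] {s : ℕ}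

/-- Second moment of centered i.i.d. sum. -/
lemma exp_sq_sum (lam : α → ℝ) (hsum : ∑ a, lam a = 1) (f : α → ℝ)
    (hmean : ∑ a, lam a * f a = 0) :
    ∑ ω : Fin s → α, (∏ k, lam (ω k)) * (∑ k, f (ω k)) ^ 2
      = s * ∑ a, lam a * f a ^ 2 := by
  classical
  have expand : ∀ ω : Fin s → α, (∏ k, lam (ω k)) * (∑ k, f (ω k)) ^ 2
      = ∑ k : Fin s, ∑ l : Fin s, (∏ m, lam (ω m)) * (f (ω k) * f (ω l)) := by
    intro ω
    rw [sq, Finset.sum_mul_sum, Finset.mul_sum]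
    refine Finset.sum_congr rfl fun k _ => ?_
    rw [Finset.mul_sum]
  simp_rw [expand]
  rw [Finset.sum_comm]
  have swap2 : ∀ k : Fin s,
      (∑ ω : Fin s → α, ∑ l : Fin s, (∏ m, lam (ω m)) * (f (ω k) * f (ω l)))
      = ∑ l : Fin s, ∑ ω : Fin s → α, (∏ m, lam (ω m)) * (f (ω k) * f (ω l)) :=
    fun k => Finset.sum_comm
  simp_rw [swap2]
  have key : ∀ k l : Fin s,
      (∑ ω : Fin s → α, (∏ m, lam (ω m)) * (f (ω k) * f (ω l)))
      = if l = k then ∑ a, lam a * f a ^ 2 else 0 := by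
    intro k l
    by_cases h : l = k
    · subst h
      rw [if_pos rfl]
      have := exp_single lam hsum (fun a => f a * f a) l
      rw [this]
      refine Finset.sum_congr rfl fun a _ => ?_
      ring
    · rw [if_neg h, exp_pair lam hsum f f k l (Ne.symm h), hmean, mul_zero]
  simp_rw [key]
  simp

/-- Per-coordinate deviation bound: `E|X̄ - μ| ≤ √(E f²)/√s`. -/
lemma per_coord (hs : 1 ≤ s) (lam : α → ℝ) (hlam : ∀ a, 0 ≤ lam a)
    (hsum : ∑ a, lam a = 1) (f : α → ℝ) :
    ∑ ω : Fin s → α, (∏ k, lam (ω k)) *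
        |1 / (s : ℝ) * (∑ k, f (ω k)) - ∑ a, lam a * f a|
      ≤ Real.sqrt (∑ a, lam a * f a ^ 2) / Real.sqrt s := by
  classical
  have hsne : (s : ℝ) ≠ 0 := Nat.cast_ne_zero.mpr (by omega)
  set μ := ∑ a, lam a * f a with hμ
  have hP1 : ∑ ω : Fin s → α, (∏ k, lam (ω k)) = 1 := by
    have := sum_prod_eval (fun (_ : Fin s) a => lam a)
    simpa [hsum] using this
  have hPnn : ∀ ω : Fin s → α, 0 ≤ ∏ k, lam (ω k) :=
    fun ω => Finset.prod_nonneg fun k _ => hlam _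
  have hmean : ∑ a, lam a * (f a - μ) = 0 := by
    simp_rw [mul_sub]
    rw [Finset.sum_sub_distrib, ← Finset.sum_mul, hsum, one_mul, ← hμ, sub_self]
  have hsplit : ∀ ω : Fin s → α, 1 / (s : ℝ) * (∑ k, f (ω k)) - μ
      = 1 / (s : ℝ) * (∑ k : Fin s, (f (ω k) - μ)) := by
    intro ω
    rw [Finset.sum_sub_distrib, Finset.sum_const, Finset.card_univ, Fintype.card_fin]
    field_simp
    rw [nsmul_eq_mul]
  simp_rw [hsplit]
  have jensen := exp_abs_le_sqrt (fun ω : Fin s → α => ∏ k, lam (ω k))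
    (fun ω => 1 / (s : ℝ) * (∑ k : Fin s, (f (ω k) - μ))) hPnn hP1
  refine jensen.trans ?_
  have hvar : ∑ ω : Fin s → α,
      (∏ k, lam (ω k)) * (1 / (s : ℝ) * (∑ k : Fin s, (f (ω k) - μ))) ^ 2
      = (∑ a, lam a * (f a - μ) ^ 2) / s := by
    have hre : ∀ ω : Fin s → α,
        (∏ k, lam (ω k)) * (1 / (s : ℝ) * (∑ k : Fin s, (f (ω k) - μ))) ^ 2
        = (1 / (s : ℝ)) ^ 2 *
            ((∏ k, lam (ω k)) * (∑ k : Fin s, (f (ω k) - μ)) ^ 2) := fun ω => by ring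
    simp_rw [hre, ← Finset.mul_sum]
    have := exp_sq_sum lam hsum (fun a => f a - μ) hmean (s := s)
    rw [this]
    field_simp
  rw [hvar]
  have hEY2nn : 0 ≤ ∑ a, lam a * (f a - μ) ^ 2 :=
    Finset.sum_nonneg fun a _ => mul_nonneg (hlam a) (sq_nonneg _)
  rw [Real.sqrt_div hEY2nn]
  have hEle : ∑ a, lam a * (f a - μ) ^ 2 ≤ ∑ a, lam a * f a ^ 2 := by
    have hexp : ∀ a : α, lam a * (f a - μ) ^ 2
        = lam a * f a ^ 2 - 2 * μ * (lam a * f a) + μ ^ 2 * lam a := fun a => by ring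
    simp_rw [hexp, Finset.sum_add_distrib, Finset.sum_sub_distrib,
      ← Finset.mul_sum, ← hμ, hsum]
    nlinarith [sq_nonneg μ]
  gcongr

end more


open Classical in
/-- for `s` i.i.d. samples from `λ` on `[n]×[n]×{−1,1}`, the expected total
ℓ₁ deviation of the empirical means of the variables `Z_w` from their expectations is at
most `2√n/(c·√s)`.  (Expectation written as an explicit finite sum over sample
sequences, weighted by the product of their `λ`-probabilities.) -/
theorem empirical_deviation_bound {n s : ℕ} (hn : 1 ≤ n) (hs : 1 ≤ s)
    (V : Type) [Fintype V] [DecidableEq V] (u v : Fin n → V)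
    (c : ℝ) (hc : 0 < c)
    (C : Fin n → Fin n → ℝ) (hCpos : ∀ i j, 0 < C i j)
    (hC : ∀ i j, u i ≠ v j → c ≤ C i j)
    (lam : Fin n × Fin n × Bool → ℝ) (hlam : ∀ p, 0 ≤ lam p)
    (hsum : ∑ p, lam p = 1)
    (Z : V → Fin n × Fin n × Bool → ℝ)
    (hZ : ∀ w p, Z w p =
      ((if u p.1 = w then (1 : ℝ) else 0) - (if v p.2.1 = w then 1 else 0)) *
        sg p.2.2 / C p.1 p.2.1) :
    (∑ ω : Fin s → Fin n × Fin n × Bool, (∏ k, lam (ω k)) *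
        (∑ w, |(1 / (s : ℝ)) * (∑ k, Z w (ω k)) - ∑ p, lam p * Z w p|)) ≤
      2 * Real.sqrt n / (c * Real.sqrt s) := by

  have hsqs : (0 : ℝ) < Real.sqrt s := Real.sqrt_pos.mpr (by
    exact_mod_cast Nat.cast_pos.mpr (by omega))
  -- Step 1: swap the sums over ω and w
  have swap1 : (∑ ω : Fin s → Fin n × Fin n × Bool, (∏ k, lam (ω k)) *
        (∑ w, |(1 / (s : ℝ)) * (∑ k, Z w (ω k)) - ∑ p, lam p * Z w p|))
      = ∑ w, ∑ ω : Fin s → Fin n × Fin n × Bool, (∏ k, lam (ω k)) *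
        |(1 / (s : ℝ)) * (∑ k, Z w (ω k)) - ∑ p, lam p * Z w p| := by
    simp_rw [Finset.mul_sum]
    rw [Finset.sum_comm]
  rw [swap1]
  -- Step 2: per-coordinate bound
  refine le_trans (Finset.sum_le_sum fun w _ =>
    per_coord hs lam hlam hsum (Z w)) ?_
  rw [← Finset.sum_div]
  -- Step 3: bound the sum of square roots by 2√n/c
  have hEZ2nn : ∀ w : V, 0 ≤ ∑ p, lam p * Z w p ^ 2 :=
    fun w => Finset.sum_nonneg fun p _ => mul_nonneg (hlam p) (sq_nonneg _)
  have main2 : ∑ w, Real.sqrt (∑ p, lam p * Z w p ^ 2)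
      ≤ 2 * Real.sqrt n / c := by
    set S : Finset V := Finset.image u Finset.univ ∪ Finset.image v Finset.univ
      with hSdef
    have hzero : ∀ w ∉ S, (∑ p, lam p * Z w p ^ 2) = 0 := by
      intro w hw
      refine Finset.sum_eq_zero fun p _ => ?_
      have h1 : u p.1 ≠ w := fun h => hw (Finset.mem_union_left _
        (Finset.mem_image.mpr ⟨p.1, Finset.mem_univ _, h⟩))
      have h2 : v p.2.1 ≠ w := fun h => hw (Finset.mem_union_right _
        (Finset.mem_image.mpr ⟨p.2.1, Finset.mem_univ _, h⟩))
      rw [hZ, if_neg h1, if_neg h2]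
      ring
    have hrestrict : ∑ w, Real.sqrt (∑ p, lam p * Z w p ^ 2)
        = ∑ w ∈ S, Real.sqrt (∑ p, lam p * Z w p ^ 2) := by
      refine (Finset.sum_subset (Finset.subset_univ S) ?_).symm
      intro w _ hw
      rw [hzero w hw, Real.sqrt_zero]
    rw [hrestrict]
    have hcard : (S.card : ℝ) ≤ 2 * n := by
      have h0 := Finset.card_union_le (Finset.image u Finset.univ)
        (Finset.image v Finset.univ)
      have h1 := Finset.card_image_le (f := u) (s := Finset.univ)
      have h2 := Finset.card_image_le (f := v) (s := Finset.univ)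
      rw [Finset.card_univ, Fintype.card_fin] at h1 h2
      have : S.card ≤ 2 * n := by rw [hSdef]; omega
      exact_mod_cast this
    have pointwise : ∀ p : Fin n × Fin n × Bool, ∑ w, Z w p ^ 2 ≤ 2 / c ^ 2 := by
      intro p
      have hb : ∀ w : V, Z w p ^ 2 ≤ 1 / c ^ 2 *
          ((if u p.1 = w then (1 : ℝ) else 0) + (if v p.2.1 = w then 1 else 0)) := by
        intro w
        rw [hZ]
        by_cases h1 : u p.1 = w <;> by_cases h2 : v p.2.1 = w
        · rw [if_pos h1, if_pos h2]
          have : ((1 : ℝ) - 1) * sg p.2.2 / C p.1 p.2.1 = 0 := by ring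
          rw [this, zero_pow (by norm_num : 2 ≠ 0)]
          positivity
        · have hne : u p.1 ≠ v p.2.1 := by
            rw [h1]; exact fun h => h2 h.symm
          have hcC := hC _ _ hne
          rw [if_pos h1, if_neg h2]
          have e : ((1 : ℝ) - 0) * sg p.2.2 / C p.1 p.2.1
              = sg p.2.2 / C p.1 p.2.1 := by ring
          rw [e, div_pow, sg_sq']
          have hle : 1 / C p.1 p.2.1 ^ 2 ≤ 1 / c ^ 2 :=
            one_div_le_one_div_of_le (by positivity)
              (pow_le_pow_left₀ hc.le hcC 2)
          calc (1 : ℝ) / C p.1 p.2.1 ^ 2 ≤ 1 / c ^ 2 := hle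
            _ = 1 / c ^ 2 * (1 + 0) := by ring
        · have hne : u p.1 ≠ v p.2.1 := by
            rw [h2]; exact h1
          have hcC := hC _ _ hne
          rw [if_neg h1, if_pos h2]
          have e : (((0 : ℝ) - 1) * sg p.2.2 / C p.1 p.2.1) ^ 2
              = 1 / C p.1 p.2.1 ^ 2 := by
            have e2 : ((0 : ℝ) - 1) * sg p.2.2 / C p.1 p.2.1
                = -(sg p.2.2 / C p.1 p.2.1) := by ring
            rw [e2, neg_sq, div_pow, sg_sq']
          rw [e]
          have hle : 1 / C p.1 p.2.1 ^ 2 ≤ 1 / c ^ 2 :=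
            one_div_le_one_div_of_le (by positivity)
              (pow_le_pow_left₀ hc.le hcC 2)
          calc (1 : ℝ) / C p.1 p.2.1 ^ 2 ≤ 1 / c ^ 2 := hle
            _ = 1 / c ^ 2 * (0 + 1) := by ring
        · rw [if_neg h1, if_neg h2]
          have : ((0 : ℝ) - 0) * sg p.2.2 / C p.1 p.2.1 = 0 := by ring
          rw [this]
          simp
      calc ∑ w, Z w p ^ 2
          ≤ ∑ w : V, (1 / c ^ 2 *
            ((if u p.1 = w then (1 : ℝ) else 0) + (if v p.2.1 = w then 1 else 0))) :=
            Finset.sum_le_sum fun w _ => hb w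
        _ = 2 / c ^ 2 := by
            rw [← Finset.mul_sum, Finset.sum_add_distrib,
              Finset.sum_ite_eq Finset.univ (u p.1) (fun _ => (1 : ℝ)),
              Finset.sum_ite_eq Finset.univ (v p.2.1) (fun _ => (1 : ℝ))]
            simp
            ring
    have hsum2 : ∑ w ∈ S, (∑ p, lam p * Z w p ^ 2) ≤ 2 / c ^ 2 := by
      calc ∑ w ∈ S, (∑ p, lam p * Z w p ^ 2)
          ≤ ∑ w : V, (∑ p, lam p * Z w p ^ 2) :=
            Finset.sum_le_sum_of_subset_of_nonneg (Finset.subset_univ S)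
              (fun w _ _ => hEZ2nn w)
        _ = ∑ p, lam p * (∑ w, Z w p ^ 2) := by
            rw [Finset.sum_comm]
            exact Finset.sum_congr rfl fun p _ => (Finset.mul_sum _ _ _).symm
        _ ≤ ∑ p, lam p * (2 / c ^ 2) :=
            Finset.sum_le_sum fun p _ =>
              mul_le_mul_of_nonneg_left (pointwise p) (hlam p)
        _ = 2 / c ^ 2 := by rw [← Finset.sum_mul, hsum, one_mul]
    have hCS : (∑ w ∈ S, Real.sqrt (∑ p, lam p * Z w p ^ 2)) ^ 2
        ≤ (S.card : ℝ) * ∑ w ∈ S, (∑ p, lam p * Z w p ^ 2) := by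
      have h := Finset.sum_mul_sq_le_sq_mul_sq S (fun _ => (1 : ℝ))
        (fun w => Real.sqrt (∑ p, lam p * Z w p ^ 2))
      simp only [one_mul, one_pow] at h
      rw [Finset.sum_const, nsmul_eq_mul, mul_one] at h
      have e : ∑ w ∈ S, Real.sqrt (∑ p, lam p * Z w p ^ 2) ^ 2
          = ∑ w ∈ S, (∑ p, lam p * Z w p ^ 2) :=
        Finset.sum_congr rfl fun w _ => Real.sq_sqrt (hEZ2nn w)
      rw [e] at h
      exact h
    have hfin : (∑ w ∈ S, Real.sqrt (∑ p, lam p * Z w p ^ 2)) ^ 2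
        ≤ 2 * n * (2 / c ^ 2) :=
      hCS.trans (mul_le_mul hcard hsum2
        (Finset.sum_nonneg fun w _ => hEZ2nn w) (by positivity))
    have hnn : 0 ≤ ∑ w ∈ S, Real.sqrt (∑ p, lam p * Z w p ^ 2) :=
      Finset.sum_nonneg fun w _ => Real.sqrt_nonneg _
    have := (Real.le_sqrt hnn (by positivity)).mpr hfin
    refine this.trans (le_of_eq ?_)
    rw [show 2 * (n : ℝ) * (2 / c ^ 2) = (2 : ℝ) ^ 2 * n / c ^ 2 by ring,
      Real.sqrt_div (by positivity), Real.sqrt_mul (by positivity),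
      Real.sqrt_sq (by norm_num : (0:ℝ) ≤ 2), Real.sqrt_sq hc.le]
  calc (∑ w, Real.sqrt (∑ p, lam p * Z w p ^ 2)) / Real.sqrt s
      ≤ (2 * Real.sqrt n / c) / Real.sqrt s := by gcongr
    _ = 2 * Real.sqrt n / (c * Real.sqrt s) := by rw [div_div]
end
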